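/- Correctness of the AC algorithm: pattern P_k ∈ D occurs in T ending at position j (i.e., P_k = T[j−|P_k| .. j)) if and only if k ∈ h(s_j), where s_j is the state reached after reading T[0..j) from the initial state via δ*. -/

import Mathlib

private lemma suffix_of_suffix_len {α : Type*} {l₁ l₂ l₃ : List α}
    (h₁ : l₁ <:+ l₃) (h₂ : l₂ <:+ l₃) (h : l₁.length ≤ l₂.length) : l₁ <:+ l₂ := by
  rw [← List.reverse_prefix] at h₁ h₂ ⊢
  exact List.prefix_of_prefix_length_le h₁ h₂ (by simpa using h)

private lemma suffix_append_single {α : Type*} {s t : List α} (h : s <:+ t) (c : α) :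
    s ++ [c] <:+ t ++ [c] := by
  obtain ⟨u, rfl⟩ := h
  exact ⟨u, (List.append_assoc u s [c]).symm⟩

private lemma ac_invariant {α ι : Type*} (P : ι → List α)
    (g : List α → α → List α)
    (St : Set (List α)) (hSt : St = {u | ∃ k, u <+: P k})
    (hg : ∀ u ∈ St, ∀ c, g u c ∈ St ∧ g u c <:+ u ++ [c] ∧
      ∀ v ∈ St, v <:+ u ++ [c] → v.length ≤ (g u c).length)
    (k : ι) (t : List α) :
    t.foldl g [] ∈ St ∧ t.foldl g [] <:+ t ∧
      ∀ v ∈ St, v <:+ t → v.length ≤ (t.foldl g []).length := by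
  induction t using List.reverseRecOn with
  | nil =>
    refine ⟨?_, List.suffix_refl _, ?_⟩
    · rw [hSt]; exact ⟨k, List.nil_prefix⟩
    · intro v _ hv
      simpa using hv.length_le
  | append_singleton t c ih =>
    obtain ⟨hmem, hsuf, hmax⟩ := ih
    set s := t.foldl g [] with hs
    have hfold : (t ++ [c]).foldl g [] = g s c := by
      rw [List.foldl_append]; rfl
    obtain ⟨h1, h2, h3⟩ := hg s hmem c
    rw [hfold]
    refine ⟨h1, h2.trans (suffix_append_single hsuf c), ?_⟩
    · intro v hv hvsuf
      rcases List.eq_nil_or_concat v with rfl | ⟨v', a, rfl⟩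
      on_goal 2 => simp only [List.concat_eq_append] at *
      · simp
      · -- v = v' ++ [a], suffix of t ++ [c]
        obtain ⟨u, hu⟩ := hvsuf
        rw [← List.append_assoc] at hu
        have ha : a = c := by
          have := congrArg List.getLast? hu
          simpa using this
        subst ha
        have hv't : u ++ v' = t := by
          have := congrArg List.dropLast hu
          simpa using this
        have hv'St : v' ∈ St := by
          rw [hSt] at hv ⊢
          obtain ⟨m, hm⟩ := hv
          exact ⟨m, (List.prefix_append v' [a]).trans hm⟩
        have hv'suf : v' <:+ t := ⟨u, hv't⟩
        have hlen : v'.length ≤ s.length := hmax v' hv'St hv'suf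
        have hv's : v' <:+ s := suffix_of_suffix_len hv'suf hsuf hlen
        exact h3 (v' ++ [a]) hv (suffix_append_single hv's a)

theorem stmt8 {α ι : Type*} (P : ι → List α) (hne : ∀ k, P k ≠ [])
    (g : List α → α → List α)
    (St : Set (List α)) (hSt : St = {u | ∃ k, u <+: P k})
    (hg : ∀ u ∈ St, ∀ c, g u c ∈ St ∧ g u c <:+ u ++ [c] ∧
      ∀ v ∈ St, v <:+ u ++ [c] → v.length ≤ (g u c).length)
    (T : List α) (j : ℕ) (hj : j ≤ T.length) (k : ι) :
    ((P k).length ≤ j ∧ P k = (T.take j).drop (j - (P k).length)) ↔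
      P k <:+ (T.take j).foldl g [] := by
  obtain ⟨hmem, hsuf, hmax⟩ := ac_invariant P g St hSt hg k (T.take j)
  have htlen : (T.take j).length = j := List.length_take_of_le hj
  have hPkSt : P k ∈ St := by rw [hSt]; exact ⟨k, List.prefix_refl _⟩
  constructor
  · rintro ⟨hle, heq⟩
    have hPsuf : P k <:+ T.take j := by
      rw [heq]
      exact List.drop_suffix _ _
    exact suffix_of_suffix_len hPsuf hsuf (hmax _ hPkSt hPsuf)
  · intro h
    have hPsuf : P k <:+ T.take j := h.trans hsuf
    have hle : (P k).length ≤ j := htlen ▸ hPsuf.length_le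
    refine ⟨hle, ?_⟩
    rw [List.suffix_iff_eq_drop, htlen] at hPsuf
    exact hPsuf
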